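/- Let F : ℝⁿ × ℝᵖ → ℝⁿ be continuously differentiable, and let S = {λ ∈ ℝᵖ : there exists x ∈ ℝⁿ with F(x, λ) = 0} be the solvability region. If λ* lies on the frontier (topological boundary) of S and x* ∈ ℝⁿ satisfies F(x*, λ*) = 0, then the partial derivative of F with respect to x at (x*, λ*) is not invertible; equivalently, the determinant of the n × n Jacobian matrix ∇ₓF(x*, λ*) equals zero. -/

import Mathlib

/-- On the frontier of the solvability region, every solution `x⋆` of
`F(x⋆, λ⋆) = 0` has a degenerate Jacobian with respect to `x`:
`det ∇ₓF(x⋆, λ⋆) = 0`. -/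
theorem jacobian_degenerate_on_frontier (n p : ℕ)
    (F : (Fin n → ℝ) × (Fin p → ℝ) → (Fin n → ℝ))
    (hF : ContDiff ℝ 1 F)
    (xs : Fin n → ℝ) (ls : Fin p → ℝ)
    (hsol : F (xs, ls) = 0)
    (hfr : ls ∈ frontier {l : Fin p → ℝ | ∃ x : Fin n → ℝ, F (x, l) = 0}) :
    LinearMap.det ((fderiv ℝ (fun x => F (x, ls)) xs).toLinearMap) = 0 := by
  by_contra hdet
  set S := {l : Fin p → ℝ | ∃ x : Fin n → ℝ, F (x, l) = 0} with hS
  -- derivative of F at (xs, ls)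
  have hFd : HasStrictFDerivAt F (fderiv ℝ F (xs, ls)) (xs, ls) :=
    (hF.contDiffAt).hasStrictFDerivAt one_ne_zero
  set DF := fderiv ℝ F (xs, ls) with hDF
  -- partial derivative in x
  have hinl : HasFDerivAt (fun x : Fin n → ℝ => (x, ls))
      (ContinuousLinearMap.inl ℝ (Fin n → ℝ) (Fin p → ℝ)) xs :=
    (hasFDerivAt_id xs).prodMk (hasFDerivAt_const ls xs)
  have hcomp : HasFDerivAt (fun x => F (x, ls))
      (DF.comp (ContinuousLinearMap.inl ℝ (Fin n → ℝ) (Fin p → ℝ))) xs :=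
    hFd.hasFDerivAt.comp xs hinl
  have hAeq : fderiv ℝ (fun x => F (x, ls)) xs
      = DF.comp (ContinuousLinearMap.inl ℝ (Fin n → ℝ) (Fin p → ℝ)) := hcomp.fderiv
  rw [hAeq] at hdet
  -- A is injective
  have hAinj : Function.Injective
      (DF.comp (ContinuousLinearMap.inl ℝ (Fin n → ℝ) (Fin p → ℝ))) := by
    have := ((DF.comp (ContinuousLinearMap.inl ℝ (Fin n → ℝ)
      (Fin p → ℝ))).toLinearMap.equivOfDetNeZero hdet).injective
    intro a b hab
    exact this (by simpa using hab)
  -- the full map Φ q = (F q, q.2) and its derivative L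
  set L : ((Fin n → ℝ) × (Fin p → ℝ)) →L[ℝ] ((Fin n → ℝ) × (Fin p → ℝ)) :=
    DF.prod (ContinuousLinearMap.snd ℝ (Fin n → ℝ) (Fin p → ℝ)) with hL
  have hΦ : HasStrictFDerivAt (fun q : (Fin n → ℝ) × (Fin p → ℝ) => (F q, q.2)) L (xs, ls) :=
    hFd.prodMk ((ContinuousLinearMap.snd ℝ (Fin n → ℝ) (Fin p → ℝ)).hasStrictFDerivAt)
  -- L is injective hence bijective
  have hLinj : Function.Injective L.toLinearMap := by
    intro q q' hq
    have hfst : DF q = DF q' := congrArg Prod.fst hq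
    have hsnd : q.2 = q'.2 := by
      have h := congrArg Prod.snd hq
      exact h
    have h3 : DF (q.1 - q'.1, 0) = 0 := by
      have hz : DF (q - q') = 0 := by rw [map_sub, hfst, sub_self]
      have hq2 : q - q' = (q.1 - q'.1, 0) := by
        rw [Prod.sub_def, hsnd, sub_self]
      rwa [hq2] at hz
    have h4 : q.1 = q'.1 := by
      have : DF (ContinuousLinearMap.inl ℝ (Fin n → ℝ) (Fin p → ℝ) (q.1 - q'.1)) = 0 := by
        simpa [ContinuousLinearMap.inl_apply] using h3
      have := hAinj (a₁ := q.1 - q'.1) (a₂ := 0) (by rw [map_zero (DF.comp (ContinuousLinearMap.inl ℝ (Fin n → ℝ) (Fin p → ℝ)))]; simpa using this)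
      exact sub_eq_zero.mp this
    exact Prod.ext h4 hsnd
  have hLbij : Function.Bijective L.toLinearMap :=
    ⟨hLinj, (LinearMap.injective_iff_surjective).mp hLinj⟩
  let e : ((Fin n → ℝ) × (Fin p → ℝ)) ≃L[ℝ] ((Fin n → ℝ) × (Fin p → ℝ)) :=
    (LinearEquiv.ofBijective L.toLinearMap hLbij).toContinuousLinearEquiv
  have hecoe : (e : ((Fin n → ℝ) × (Fin p → ℝ)) →L[ℝ] ((Fin n → ℝ) × (Fin p → ℝ))) = L := by
    ext q <;> rfl
  have hΦe : HasStrictFDerivAt (fun q : (Fin n → ℝ) × (Fin p → ℝ) => (F q, q.2))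
      (e : ((Fin n → ℝ) × (Fin p → ℝ)) →L[ℝ] ((Fin n → ℝ) × (Fin p → ℝ))) (xs, ls) := by
    rw [hecoe]; exact hΦ
  -- inverse function theorem: image of Φ is a neighborhood of (0, ls)
  have hmap := hΦe.map_nhds_eq_of_equiv
  have hrange : Set.range (fun q : (Fin n → ℝ) × (Fin p → ℝ) => (F q, q.2))
      ∈ nhds ((0 : Fin n → ℝ), ls) := by
    have : (fun q : (Fin n → ℝ) × (Fin p → ℝ) => (F q, q.2)) (xs, ls) = (0, ls) := by
      simp [hsol]
    rw [← this, ← hmap]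
    exact Filter.range_mem_map
  -- pull back along l ↦ (0, l)
  have hScont : S ∈ nhds ls := by
    have hc : Continuous (fun l : Fin p → ℝ => ((0 : Fin n → ℝ), l)) :=
      continuous_const.prodMk continuous_id
    have hpre : (fun l : Fin p → ℝ => ((0 : Fin n → ℝ), l)) ⁻¹'
        (Set.range (fun q : (Fin n → ℝ) × (Fin p → ℝ) => (F q, q.2))) ∈ nhds ls :=
      hc.continuousAt.preimage_mem_nhds (by simpa using hrange)
    refine Filter.mem_of_superset hpre ?_
    rintro l ⟨q, hq⟩
    have h1 : F q = 0 := (Prod.ext_iff.mp hq).1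
    have h2 : q.2 = l := (Prod.ext_iff.mp hq).2
    exact ⟨q.1, by rw [← h2]; simpa using h1⟩
  have : ls ∈ interior S := mem_interior_iff_mem_nhds.mpr hScont
  exact hfr.2 this
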